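/- Let E be a topological vector space over a valued field K and U, V ⊆ E be balanced open 0-neighborhoods with V + V ⊆ U. Then the Minkowski functionals satisfy μ_U(x + y) ≤ max{μ_V(x), μ_V(y)} for all x, y ∈ E. -/

import Mathlib

open Pointwise

/-- The Minkowski functional of a subset `U` of a vector space over a valued field `K`. -/
noncomputable def minkowskiGauge (K : Type*) {E : Type*} [NontriviallyNormedField K]
    [AddCommGroup E] [Module K E] (U : Set E) (x : E) : ℝ :=
  sInf {r : ℝ | ∃ t : K, t ≠ 0 ∧ ‖t‖ = r ∧ x ∈ t • U}

/-- ultrametric-type inequality for Minkowski functionals (Lemma 1.29):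
if `V + V ⊆ U` then `μ_U(x+y) ≤ max{μ_V(x), μ_V(y)}`. -/
theorem stmt5 {K E : Type*} [NontriviallyNormedField K]
    [AddCommGroup E] [Module K E] [TopologicalSpace E] [IsTopologicalAddGroup E]
    [ContinuousSMul K E]
    (U V : Set E)
    (hUbal : ∀ t : K, ‖t‖ ≤ 1 → t • U ⊆ U) (hUopen : IsOpen U) (hU0 : (0 : E) ∈ U)
    (hVbal : ∀ t : K, ‖t‖ ≤ 1 → t • V ⊆ V) (hVopen : IsOpen V) (hV0 : (0 : E) ∈ V)
    (hVV : V + V ⊆ U) :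
    ∀ x y : E, minkowskiGauge K U (x + y) ≤ max (minkowskiGauge K V x) (minkowskiGauge K V y) := by
  -- key combination lemma
  have key : ∀ (x y : E) (t₁ t₂ : K), t₂ ≠ 0 → ‖t₁‖ ≤ ‖t₂‖ →
      x ∈ t₁ • V → y ∈ t₂ • V → x + y ∈ t₂ • U := by
    intro x y t₁ t₂ ht₂ hle hx hy
    have hx' : x ∈ t₂ • V := by
      have : t₁ • V = t₂ • ((t₂⁻¹ * t₁) • V) := by
        rw [smul_smul]; congr 1; field_simp
      rw [this] at hx
      rcases hx with ⟨v, hv, rfl⟩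
      exact ⟨_, hVbal (t₂⁻¹ * t₁) (by
        rw [norm_mul, norm_inv]
        calc ‖t₂‖⁻¹ * ‖t₁‖ ≤ ‖t₂‖⁻¹ * ‖t₂‖ := by
              gcongr
        _ = 1 := inv_mul_cancel₀ (by simpa using ht₂)) hv, rfl⟩
    rcases hx' with ⟨v, hv, rfl⟩
    rcases hy with ⟨w, hw, rfl⟩
    exact ⟨v + w, hVV (Set.add_mem_add hv hw), by simp [smul_add]⟩
  intro x y
  set SV : E → Set ℝ := fun z => {r : ℝ | ∃ t : K, t ≠ 0 ∧ ‖t‖ = r ∧ z ∈ t • V} with hSV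
  have hne : ∀ z : E, (SV z).Nonempty := by
    intro z
    have hcont : Continuous fun c : K => c • z := by continuity
    have : {c : K | c • z ∈ V} ∈ nhds (0 : K) := by
      have := hVopen.mem_nhds (show (0 : K) • z ∈ V by simpa using hV0)
      exact hcont.continuousAt.preimage_mem_nhds this
    rcases Metric.mem_nhds_iff.1 this with ⟨δ, hδ, hball⟩
    rcases NormedField.exists_norm_lt K hδ with ⟨c, hc0, hcδ⟩
    have hc : c ≠ 0 := by simpa using (norm_pos_iff.1 hc0)
    have hcV : c • z ∈ V := hball (by simpa [Metric.mem_ball, dist_zero_right] using hcδ)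
    exact ⟨‖c⁻¹‖, c⁻¹, inv_ne_zero hc, rfl, ⟨c • z, hcV, by simp [smul_smul, inv_mul_cancel₀ hc]⟩⟩
  have hbddU : BddBelow {r : ℝ | ∃ t : K, t ≠ 0 ∧ ‖t‖ = r ∧ x + y ∈ t • U} := by
    exact ⟨0, fun r ⟨t, _, ht, _⟩ => ht ▸ norm_nonneg t⟩
  refine le_of_forall_pos_le_add fun ε hε => ?_
  have hεx := Real.lt_sInf_add_pos (hne x) hε
  have hεy := Real.lt_sInf_add_pos (hne y) hε
  rcases hεx with ⟨r₁, ⟨t₁, ht₁0, ht₁n, hxt₁⟩, hr₁⟩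
  rcases hεy with ⟨r₂, ⟨t₂, ht₂0, ht₂n, hyt₂⟩, hr₂⟩
  rcases le_total ‖t₁‖ ‖t₂‖ with hle | hle
  · have hmem : x + y ∈ t₂ • U := key x y t₁ t₂ ht₂0 hle hxt₁ hyt₂
    have : minkowskiGauge K U (x + y) ≤ r₂ :=
      csInf_le hbddU ⟨t₂, ht₂0, ht₂n, hmem⟩
    refine this.trans ?_
    have : r₂ < minkowskiGauge K V y + ε := hr₂
    exact le_trans this.le (by
      have : minkowskiGauge K V y ≤ max (minkowskiGauge K V x) (minkowskiGauge K V y) :=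
        le_max_right _ _
      linarith)
  · have hmem : x + y ∈ t₁ • U := by
      have := key y x t₂ t₁ ht₁0 hle hyt₂ hxt₁
      simpa [add_comm] using this
    have : minkowskiGauge K U (x + y) ≤ r₁ :=
      csInf_le hbddU ⟨t₁, ht₁0, ht₁n, hmem⟩
    refine this.trans ?_
    have h1 : r₁ < minkowskiGauge K V x + ε := hr₁
    have h2 : minkowskiGauge K V x ≤ max (minkowskiGauge K V x) (minkowskiGauge K V y) :=
      le_max_left _ _
    linarith
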